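/- Equip P = k[x₁,x₂,x₃] with the Poisson bracket {x₁,x₂} = x₁x₂, {x₂,x₃} = 3x₁² + 2x₁x₂ + x₂x₃, {x₃,x₁} = x₁² + x₁x₃. Then for an invertible matrix M = (a_{ij}): (i) φ_M is a graded Poisson automorphism of P if and only if M = [[a,0,0],[0,a²/b,0],[b−a,0,b]] for some a, b ∈ k \ {0}; (ii) φ_M is a Poisson reflection of P if and only if M = [[−1,0,0],[0,1,0],[2,0,1]]. -/

import Mathlib

open MvPolynomial

/-- The bracket on `k[x₁,x₂,x₃]` determined by the values `p12 = {x₁,x₂}`, `p23 = {x₂,x₃}`,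
`p31 = {x₃,x₁}` via `{f,g} = Σ_{i<j} (∂f/∂xᵢ·∂g/∂xⱼ − ∂f/∂xⱼ·∂g/∂xᵢ)·{xᵢ,xⱼ}`. -/
noncomputable def jacBracket {k : Type*} [Field k] (p12 p23 p31 : MvPolynomial (Fin 3) k)
    (f g : MvPolynomial (Fin 3) k) : MvPolynomial (Fin 3) k :=
  (pderiv 0 f * pderiv 1 g - pderiv 1 f * pderiv 0 g) * p12 +
    (pderiv 1 f * pderiv 2 g - pderiv 2 f * pderiv 1 g) * p23 +
    (pderiv 2 f * pderiv 0 g - pderiv 0 f * pderiv 2 g) * p31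

/-- The graded algebra endomorphism `φ_M` of `k[x₁,x₂,x₃]` with `φ_M(xᵢ) = Σⱼ M i j · xⱼ`. -/
noncomputable def phiM {k : Type*} [Field k] (M : Matrix (Fin 3) (Fin 3) k) :
    MvPolynomial (Fin 3) k →ₐ[k] MvPolynomial (Fin 3) k :=
  aeval fun i => ∑ j, C (M i j) * X j

/-- `φ_M` is a graded Poisson automorphism (for invertible `M`) iff it preserves the bracket. -/
def IsPoissonAut {k : Type*} [Field k]
    (br : MvPolynomial (Fin 3) k → MvPolynomial (Fin 3) k → MvPolynomial (Fin 3) k)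
    (M : Matrix (Fin 3) (Fin 3) k) : Prop :=
  ∀ f g, phiM M (br f g) = br (phiM M f) (phiM M g)

/-- `φ_M` is a Poisson reflection: a graded Poisson automorphism of finite order whose
eigenvalues are `1, 1, ξ` for some root of unity `ξ ≠ 1`. -/
def IsPoissonReflection {k : Type*} [Field k]
    (br : MvPolynomial (Fin 3) k → MvPolynomial (Fin 3) k → MvPolynomial (Fin 3) k)
    (M : Matrix (Fin 3) (Fin 3) k) : Prop :=
  IsPoissonAut br M ∧ (∃ n, 0 < n ∧ M ^ n = 1) ∧
    ∃ ξ : k, ξ ≠ 1 ∧ (∃ m, 0 < m ∧ ξ ^ m = 1) ∧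
      M.charpoly = (Polynomial.X - 1) ^ 2 * (Polynomial.X - Polynomial.C ξ)

section Aux

variable {k : Type*} [Field k] (p12 p23 p31 : MvPolynomial (Fin 3) k)

lemma jB_C_right (f : MvPolynomial (Fin 3) k) (c : k) :
    jacBracket p12 p23 p31 f (C c) = 0 := by
  simp [jacBracket, pderiv_C]

lemma jB_C_left (g : MvPolynomial (Fin 3) k) (c : k) :
    jacBracket p12 p23 p31 (C c) g = 0 := by
  simp [jacBracket, pderiv_C]

lemma jB_self (f : MvPolynomial (Fin 3) k) :
    jacBracket p12 p23 p31 f f = 0 := by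
  simp only [jacBracket]; ring

lemma jB_add_right (f g h : MvPolynomial (Fin 3) k) :
    jacBracket p12 p23 p31 f (g + h)
      = jacBracket p12 p23 p31 f g + jacBracket p12 p23 p31 f h := by
  simp only [jacBracket, map_add]; ring

lemma jB_add_left (f g h : MvPolynomial (Fin 3) k) :
    jacBracket p12 p23 p31 (f + g) h
      = jacBracket p12 p23 p31 f h + jacBracket p12 p23 p31 g h := by
  simp only [jacBracket, map_add]; ring

lemma jB_mul_right (f g h : MvPolynomial (Fin 3) k) :
    jacBracket p12 p23 p31 f (g * h)
      = g * jacBracket p12 p23 p31 f h + h * jacBracket p12 p23 p31 f g := by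
  simp only [jacBracket, pderiv_mul]; ring

lemma jB_mul_left (f g h : MvPolynomial (Fin 3) k) :
    jacBracket p12 p23 p31 (f * g) h
      = f * jacBracket p12 p23 p31 g h + g * jacBracket p12 p23 p31 f h := by
  simp only [jacBracket, pderiv_mul]; ring

lemma phiM_X (M : Matrix (Fin 3) (Fin 3) k) (i : Fin 3) :
    phiM M (X i) = C (M i 0) * X 0 + C (M i 1) * X 1 + C (M i 2) * X 2 := by
  simp [phiM, Fin.sum_univ_three]

lemma aut_of_gen (M : Matrix (Fin 3) (Fin 3) k)
    (h : ∀ i j, phiM M (jacBracket p12 p23 p31 (X i) (X j))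
      = jacBracket p12 p23 p31 (phiM M (X i)) (phiM M (X j))) :
    IsPoissonAut (jacBracket p12 p23 p31) M := by
  have key1 : ∀ i g, phiM M (jacBracket p12 p23 p31 (X i) g)
      = jacBracket p12 p23 p31 (phiM M (X i)) (phiM M g) := by
    intro i g
    induction g using MvPolynomial.induction_on with
    | C c => simp [jB_C_right]
    | add p q hp hq => rw [jB_add_right, map_add, hp, hq, map_add, jB_add_right]
    | mul_X p j hp =>
        rw [jB_mul_right, map_add, map_mul, map_mul, hp, h i j, map_mul, jB_mul_right]
  intro f g
  induction f using MvPolynomial.induction_on with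
  | C c => simp [jB_C_left]
  | add p q hp hq => rw [jB_add_left, map_add, hp, hq, map_add, jB_add_left]
  | mul_X p j hp =>
      rw [jB_mul_left, map_add, map_mul, map_mul, hp, key1 j g, map_mul, jB_mul_left]

lemma charpoly3 (a e g b : k) :
    (!![a, 0, 0; 0, e, 0; g, 0, b]).charpoly
      = (Polynomial.X - Polynomial.C a) *
        ((Polynomial.X - Polynomial.C e) * (Polynomial.X - Polynomial.C b)) := by
  rw [Matrix.charpoly, Matrix.det_fin_three]
  simp [Matrix.charmatrix_apply_eq, Matrix.charmatrix_apply_ne]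
  ring

end Aux

set_option maxHeartbeats 1000000 in
/-- Case `{x₁,x₂} = x₁x₂`, `{x₂,x₃} = 3x₁² + 2x₁x₂ + x₂x₃`, `{x₃,x₁} = x₁² + x₁x₃`. -/
theorem stmt_9 {k : Type*} [Field k] [IsAlgClosed k] [CharZero k]
    (M : Matrix (Fin 3) (Fin 3) k) (hM : IsUnit M.det) :
    (IsPoissonAut (jacBracket (X 0 * X 1) (3 * X 0 ^ 2 + 2 * X 0 * X 1 + X 1 * X 2)
        (X 0 ^ 2 + X 0 * X 2)) M ↔
      ∃ a b : k, a ≠ 0 ∧ b ≠ 0 ∧ M = !![a, 0, 0; 0, a ^ 2 / b, 0; b - a, 0, b]) ∧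
    (IsPoissonReflection (jacBracket (X 0 * X 1) (3 * X 0 ^ 2 + 2 * X 0 * X 1 + X 1 * X 2)
        (X 0 ^ 2 + X 0 * X 2)) M ↔
      M = !![-1, 0, 0; 0, 1, 0; 2, 0, 1]) := by
  have main : IsPoissonAut (jacBracket (X 0 * X 1) (3 * X 0 ^ 2 + 2 * X 0 * X 1 + X 1 * X 2)
        (X 0 ^ 2 + X 0 * X 2)) M ↔
      ∃ a b : k, a ≠ 0 ∧ b ≠ 0 ∧ M = !![a, 0, 0; 0, a ^ 2 / b, 0; b - a, 0, b] := by
    constructor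
    · intro H
      have hA1 := congrArg (eval ![(1:k),0,0]) (H (X 0) (X 1))
      have hA2 := congrArg (eval ![(0:k),1,0]) (H (X 0) (X 1))
      have hA3 := congrArg (eval ![(0:k),0,1]) (H (X 0) (X 1))
      have hA5 := congrArg (eval ![(1:k),0,1]) (H (X 0) (X 1))
      have hB1 := congrArg (eval ![(1:k),0,0]) (H (X 1) (X 2))
      have hB2 := congrArg (eval ![(0:k),1,0]) (H (X 1) (X 2))
      have hB3 := congrArg (eval ![(0:k),0,1]) (H (X 1) (X 2))
      have hB4 := congrArg (eval ![(1:k),1,0]) (H (X 1) (X 2))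
      have hC1 := congrArg (eval ![(1:k),0,0]) (H (X 2) (X 0))
      have hC2 := congrArg (eval ![(0:k),1,0]) (H (X 2) (X 0))
      have hC3 := congrArg (eval ![(0:k),0,1]) (H (X 2) (X 0))
      have hC4 := congrArg (eval ![(1:k),1,0]) (H (X 2) (X 0))
      have hC6 := congrArg (eval ![(0:k),1,1]) (H (X 2) (X 0))
      simp [jacBracket, phiM, Fin.sum_univ_three, pderiv_mul, pderiv_C, pderiv_pow, map_ofNat,
        Matrix.cons_val_zero, Matrix.cons_val_one, Matrix.head_cons, -mul_eq_zero] at hA1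
      simp [jacBracket, phiM, Fin.sum_univ_three, pderiv_mul, pderiv_C, pderiv_pow, map_ofNat,
        Matrix.cons_val_zero, Matrix.cons_val_one, Matrix.head_cons, -mul_eq_zero] at hA2
      simp [jacBracket, phiM, Fin.sum_univ_three, pderiv_mul, pderiv_C, pderiv_pow, map_ofNat,
        Matrix.cons_val_zero, Matrix.cons_val_one, Matrix.head_cons, -mul_eq_zero] at hA3
      simp [jacBracket, phiM, Fin.sum_univ_three, pderiv_mul, pderiv_C, pderiv_pow, map_ofNat,
        Matrix.cons_val_zero, Matrix.cons_val_one, Matrix.head_cons, -mul_eq_zero] at hA5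
      simp [jacBracket, phiM, Fin.sum_univ_three, pderiv_mul, pderiv_C, pderiv_pow, map_ofNat,
        Matrix.cons_val_zero, Matrix.cons_val_one, Matrix.head_cons, -mul_eq_zero] at hB1
      simp [jacBracket, phiM, Fin.sum_univ_three, pderiv_mul, pderiv_C, pderiv_pow, map_ofNat,
        Matrix.cons_val_zero, Matrix.cons_val_one, Matrix.head_cons, -mul_eq_zero] at hB2
      simp [jacBracket, phiM, Fin.sum_univ_three, pderiv_mul, pderiv_C, pderiv_pow, map_ofNat,
        Matrix.cons_val_zero, Matrix.cons_val_one, Matrix.head_cons, -mul_eq_zero] at hB3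
      simp [jacBracket, phiM, Fin.sum_univ_three, pderiv_mul, pderiv_C, pderiv_pow, map_ofNat,
        Matrix.cons_val_zero, Matrix.cons_val_one, Matrix.head_cons, -mul_eq_zero] at hB4
      simp [jacBracket, phiM, Fin.sum_univ_three, pderiv_mul, pderiv_C, pderiv_pow, map_ofNat,
        Matrix.cons_val_zero, Matrix.cons_val_one, Matrix.head_cons, -mul_eq_zero] at hC1
      simp [jacBracket, phiM, Fin.sum_univ_three, pderiv_mul, pderiv_C, pderiv_pow, map_ofNat,
        Matrix.cons_val_zero, Matrix.cons_val_one, Matrix.head_cons, -mul_eq_zero] at hC2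
      simp [jacBracket, phiM, Fin.sum_univ_three, pderiv_mul, pderiv_C, pderiv_pow, map_ofNat,
        Matrix.cons_val_zero, Matrix.cons_val_one, Matrix.head_cons, -mul_eq_zero] at hC3
      simp [jacBracket, phiM, Fin.sum_univ_three, pderiv_mul, pderiv_C, pderiv_pow, map_ofNat,
        Matrix.cons_val_zero, Matrix.cons_val_one, Matrix.head_cons, -mul_eq_zero] at hC4
      simp [jacBracket, phiM, Fin.sum_univ_three, pderiv_mul, pderiv_C, pderiv_pow, map_ofNat,
        Matrix.cons_val_zero, Matrix.cons_val_one, Matrix.head_cons, -mul_eq_zero] at hC6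
      -- coefficient equations
      have E1 : M 0 2 * M 1 2 = 0 := by linear_combination hA3
      have E3 : M 0 1 * M 1 1 = 0 := by linear_combination hA2
      have E4 : 2 * (M 0 0 * M 1 2) = 0 := by linear_combination hA5 - hA1 - hA3
      have E6 : 3 * (M 0 2 * M 1 1) - M 0 2 * M 1 0 - 3 * (M 0 1 * M 1 2)
          + M 0 0 * M 1 2 + M 0 0 * M 1 0 = 0 := by linear_combination hA1
      have E7 : M 1 2 * M 2 2 + 2 * (M 0 2 * M 1 2) + 3 * M 0 2 ^ 2 = 0 := by
        linear_combination hB3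
      have E9 : M 1 1 * M 2 1 + 2 * (M 0 1 * M 1 1) + 3 * M 0 1 ^ 2 = 0 := by
        linear_combination hB2
      have E11 : 2 * (M 1 2 * M 2 1) - 2 * (M 1 1 * M 2 2) + 2 * (M 1 1 * M 2 0)
          + 2 * (M 0 1 * M 1 0) + 2 * (M 0 0 * M 1 1) + 6 * (M 0 0 * M 0 1) = 0 := by
        linear_combination hB4 - hB1 - hB2
      have E12 : 3 * (M 1 2 * M 2 1) - M 1 2 * M 2 0 - 3 * (M 1 1 * M 2 2)
          + M 1 0 * M 2 2 + M 1 0 * M 2 0 + 2 * (M 0 0 * M 1 0) + 3 * M 0 0 ^ 2 = 0 := by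
        linear_combination hB1
      have E13 : M 0 2 * M 2 2 + M 0 2 ^ 2 = 0 := by linear_combination hC3
      have E14 : 2 * (M 0 1 * M 2 2) + 2 * (M 0 1 * M 0 2) = 0 := by
        linear_combination hC6 - hC2 - hC3
      have E15 : M 0 1 * M 2 1 + M 0 1 ^ 2 = 0 := by linear_combination hC2
      have E17 : -2 * (M 0 2 * M 2 1) + 2 * (M 0 1 * M 2 2) + 2 * (M 0 0 * M 2 1)
          + 2 * (M 0 0 * M 0 1) = 0 := by linear_combination hC4 - hC1 - hC2
      clear hA1 hA2 hA3 hA5 hB1 hB2 hB3 hB4 hC1 hC2 hC3 hC4 hC6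
      -- step 1 : M 0 2 = 0
      have hc : M 0 2 = 0 := by
        by_contra hc
        have h1 : M 2 2 = -M 0 2 := by
          rcases mul_eq_zero.mp (show M 0 2 * (M 2 2 + M 0 2) = 0 by
            linear_combination E13) with h | h
          · exact absurd h hc
          · exact eq_neg_of_add_eq_zero_left h
        have h2 : M 1 2 = -(3 * M 0 2) := by
          rcases mul_eq_zero.mp (show M 0 2 * (M 1 2 + 3 * M 0 2) = 0 by
            linear_combination E7 - M 1 2 * h1) with h | h
          · exact absurd h hc
          · exact eq_neg_of_add_eq_zero_left h
        have : M 0 2 * M 0 2 = 0 := by linear_combination (-1/3 : k) * E1 + (1/3 : k) * M 0 2 * h2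
        exact hc (mul_self_eq_zero.mp this)
      -- step 2 : M 0 1 = 0
      have hb01 : M 0 1 = 0 := by
        by_contra hb01
        have hi0 : M 2 2 = 0 := by
          rcases mul_eq_zero.mp (show M 0 1 * M 2 2 = 0 by
            linear_combination (1/2 : k) * E14 - M 0 1 * hc) with h | h
          · exact absurd h hb01
          · exact h
        have he0 : M 1 1 = 0 := by
          rcases mul_eq_zero.mp E3 with h | h
          · exact absurd h hb01
          · exact h
        have : M 0 1 * M 0 1 = 0 := by
          linear_combination (1/3 : k) * E9 - (1/3 : k) * M 2 1 * he0 - (2/3 : k) * M 0 1 * he0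
        exact hb01 (mul_self_eq_zero.mp this)
      have hdet : M.det ≠ 0 := hM.ne_zero
      have hdet' : M 0 0 * (M 1 1 * M 2 2 - M 1 2 * M 2 1) ≠ 0 := by
        rw [Matrix.det_fin_three] at hdet
        intro h
        exact hdet (by linear_combination h + (M 1 2 * M 2 0 - M 1 0 * M 2 2) * hb01
          + (M 1 0 * M 2 1 - M 1 1 * M 2 0) * hc)
      have ha : M 0 0 ≠ 0 := fun h => hdet' (by rw [h]; ring)
      have hf : M 1 2 = 0 := by
        rcases mul_eq_zero.mp (show M 0 0 * M 1 2 = 0 by linear_combination (1/2:k) * E4)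
          with h | h
        · exact absurd h ha
        · exact h
      have hd : M 1 0 = 0 := by
        rcases mul_eq_zero.mp (show M 0 0 * M 1 0 = 0 by
          linear_combination E6 - (3 * M 1 1 - M 1 0) * hc + 3 * M 0 1 * hf - M 0 0 * hf)
          with h | h
        · exact absurd h ha
        · exact h
      have hh : M 2 1 = 0 := by
        rcases mul_eq_zero.mp (show M 0 0 * M 2 1 = 0 by
          linear_combination (1/2:k) * E17 + M 2 1 * hc - (M 2 2 + M 0 0) * hb01) with h | h
        · exact absurd h ha
        · exact h
      have hei' : M 1 1 * M 2 2 ≠ 0 := by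
        intro h
        exact hdet' (by rw [hf, hh]; rw [show M 1 1 * M 2 2 - 0 * 0 = M 1 1 * M 2 2 by ring, h,
          mul_zero])
      have he : M 1 1 ≠ 0 := fun h => hei' (by rw [h, zero_mul])
      have hi : M 2 2 ≠ 0 := fun h => hei' (by rw [h, mul_zero])
      have hg : M 2 0 = M 2 2 - M 0 0 := by
        rcases mul_eq_zero.mp (show M 1 1 * (M 2 0 - (M 2 2 - M 0 0)) = 0 by
          linear_combination (1/2:k) * E11 - M 2 1 * hf - (M 1 0 + 3 * M 0 0) * hb01) with h | h
        · exact absurd h he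
        · exact sub_eq_zero.mp h
      have hei : M 1 1 * M 2 2 = M 0 0 ^ 2 := by
        linear_combination (-1/3 : k) * E12 + (M 2 1 - (1/3:k) * M 2 0) * hf
          + ((1/3:k) * M 2 2 + (1/3:k) * M 2 0 + (2/3:k) * M 0 0) * hd
      refine ⟨M 0 0, M 2 2, ha, hi, ?_⟩
      have h11 : M 1 1 = M 0 0 ^ 2 / M 2 2 := by
        field_simp
        linear_combination hei
      ext i j
      fin_cases i <;> fin_cases j <;>
        simp [hb01, hc, hd, hf, hg, hh, h11]
    · rintro ⟨a, b, ha, hb, rfl⟩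
      have hE : (C (a ^ 2 / b) * C b : MvPolynomial (Fin 3) k) = C a ^ 2 := by
        rw [← C_mul, div_mul_cancel₀ _ hb, ← C_pow]
      have h0 : phiM !![a, 0, 0; 0, a ^ 2 / b, 0; b - a, 0, b] (X 0)
          = C a * X 0 := by rw [phiM_X]; simp
      have h1 : phiM !![a, 0, 0; 0, a ^ 2 / b, 0; b - a, 0, b] (X 1)
          = C (a ^ 2 / b) * X 1 := by rw [phiM_X]; simp
      have h2 : phiM !![a, 0, 0; 0, a ^ 2 / b, 0; b - a, 0, b] (X 2)
          = C (b - a) * X 0 + C b * X 2 := by rw [phiM_X]; simp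
      apply aut_of_gen
      intro i j
      fin_cases i <;> fin_cases j <;> simp only [Fin.zero_eta, Fin.mk_one, jB_self, map_zero] <;>
        simp [jacBracket, pderiv_mul, pderiv_C, map_ofNat, h0, h1, h2, mul_sub, sub_mul] <;>
        first
          | ring1
          | linear_combination (3 * (X 0 : MvPolynomial (Fin 3) k) ^ 2) * hE
          | linear_combination (-3 * (X 0 : MvPolynomial (Fin 3) k) ^ 2) * hE
  refine ⟨main, ?_⟩
  constructor
  · rintro ⟨hAut, -, ξ, hξ1, -, hcp⟩
    obtain ⟨a, b, ha, hb, rfl⟩ := main.mp hAut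
    rw [charpoly3] at hcp
    have he : a ^ 2 / b * b = a ^ 2 := div_mul_cancel₀ _ hb
    have s0 := congrArg (Polynomial.eval (0:k)) hcp
    have s1 := congrArg (Polynomial.eval (1:k)) hcp
    have s2 := congrArg (Polynomial.eval (2:k)) hcp
    have sm1 := congrArg (Polynomial.eval (-1:k)) hcp
    simp [-mul_eq_zero] at s0 s1 s2 sm1
    have s0' : a * (a ^ 2 / b) * b = ξ := by linear_combination s0
    have s1' : (1 - a) * ((1 - a ^ 2 / b) * (1 - b)) = 0 := by linear_combination s1
    have s2' : (2 - a) * ((2 - a ^ 2 / b) * (2 - b)) - (2 - ξ) = 0 := by linear_combination s2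
    have sm1' : (-1 - a) * ((-1 - a ^ 2 / b) * (-1 - b)) - 4 * (-1 - ξ) = 0 := by
      linear_combination sm1
    have hσ2 : a * (a ^ 2 / b) + a * b + (a ^ 2 / b) * b = 1 + 2 * ξ := by
      linear_combination (1/2 : k) * s1' - (1/2 : k) * sm1'
    have hσ1 : a + (a ^ 2 / b) + b = 2 + ξ := by
      linear_combination (1/3 : k) * (s1' - s2') + (1/6 : k) * (s1' - sm1')
    have hξa : ξ = a ^ 3 := by linear_combination -s0' + a * he
    have hAeq : a * b + a ^ 2 + b ^ 2 - (2 + a ^ 3) * b = 0 := by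
      linear_combination b * hσ1 - he + b * hξa
    have hkey : b * ((a - 1) ^ 3 * (a + 1)) = 0 := by
      linear_combination b * hσ2 - b * he + (2 * b - a * b) * hξa - a * b * hσ1
    have h31 : (a - 1) ^ 3 * (a + 1) = 0 := by
      rcases mul_eq_zero.mp hkey with h | h
      · exact absurd h hb
      · exact h
    have ha1 : a = -1 := by
      rcases mul_eq_zero.mp h31 with h | h
      · exfalso
        have ha' : a = 1 := sub_eq_zero.mp (pow_eq_zero_iff (by norm_num : (3:ℕ) ≠ 0) |>.mp h)
        exact hξ1 (by rw [hξa, ha', one_pow])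
      · exact eq_neg_of_add_eq_zero_left h
    subst ha1
    have hb1 : b = 1 := by
      have hsq : (b - 1) ^ 2 = 0 := by linear_combination hAeq
      exact sub_eq_zero.mp (pow_eq_zero_iff (by norm_num : (2:ℕ) ≠ 0) |>.mp hsq)
    subst hb1
    ext i j
    fin_cases i <;> fin_cases j <;> norm_num
  · intro h
    subst h
    refine ⟨main.mpr ⟨-1, 1, by norm_num, one_ne_zero, ?_⟩, ⟨2, by norm_num, ?_⟩,
      -1, by norm_num, ⟨2, by norm_num, by norm_num⟩, ?_⟩
    · ext i j
      fin_cases i <;> fin_cases j <;> norm_num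
    · ext i j
      fin_cases i <;> fin_cases j <;>
        simp [pow_two, Matrix.mul_apply, Fin.sum_univ_three, Matrix.one_apply]
    · rw [charpoly3]
      simp only [map_neg, map_one]
      ring
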